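/- arXiv:2202.02854 — 2 statements merged into one kernel-verified Lean document; each statement's English description precedes it below -/
import Mathlib

section
/- Let p(z) = a + p₁z + p₂z² + o(z²) and φ(z) = a + b₁z + b₂z² + o(z²) be holomorphic functions on the open unit disk 𝔻 such that φ is subordinate to p (i.e., φ = p ∘ ω for some holomorphic ω : 𝔻 → 𝔻 with ω(0) = 0). Then for every μ ∈ ℂ, |b₂ − μb₁²| ≤ max(|p₁|, |p₂ − μp₁²|). -/
open Metric Complex Set Filter

lemma fs_coeff_two (f : ℂ → ℂ) (hf : AnalyticAt ℂ f 0) :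
    deriv (dslope f 0) 0 = iteratedDeriv 2 f 0 / 2 := by
  obtain ⟨q, hq⟩ := hf
  have h1 : deriv (dslope f 0) 0 = q.coeff 2 := by
    have h := (hq.has_fpower_series_dslope_fslope).deriv
    rw [h]
    exact q.coeff_fslope (n := 1)
  have h2 : iteratedDeriv 2 f 0 = 2 * q.coeff 2 := by
    obtain ⟨r, hr⟩ := hq
    have h : Nat.factorial 2 • q.coeff 2 = iteratedDeriv 2 f 0 := by
      rw [iteratedDeriv_eq_iteratedFDeriv]
      exact hr.factorial_smul (1 : ℂ) 2
    rw [← h, Nat.factorial_two, nsmul_eq_mul]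
    norm_num
  rw [h1, h2]; ring


lemma fs_schwarz (ω : ℂ → ℂ) (hω : DifferentiableOn ℂ ω (ball 0 1)) (hω0 : ω 0 = 0)
    (hωmaps : Set.MapsTo ω (ball 0 1) (ball 0 1)) :
    ‖deriv ω 0‖ ≤ 1 ∧
      ‖deriv (dslope ω 0) 0‖ ≤ 1 - ‖deriv ω 0‖ ^ 2 := by
  have h0 : (0:ℂ) ∈ ball (0:ℂ) 1 := mem_ball_self one_pos
  set g := dslope ω 0 with hgdef
  have hg0 : g 0 = deriv ω 0 := dslope_same ω 0
  have hmaps' : Set.MapsTo ω (ball 0 1) (ball (ω 0) 1) := by rwa [hω0]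
  have hgb : ∀ z ∈ ball (0:ℂ) 1, ‖g z‖ ≤ 1 := by
    intro z hz
    have := Complex.norm_dslope_le_div_of_mapsTo_ball hω (hmaps'.mono_right ball_subset_closedBall) hz
    simpa using this
  have hgd : DifferentiableOn ℂ g (ball 0 1) :=
    (Complex.differentiableOn_dslope (isOpen_ball.mem_nhds h0)).mpr hω
  set c₁ := deriv ω 0 with hc₁def
  have hc₁le : ‖c₁‖ ≤ 1 := by rw [← hg0]; exact hgb 0 h0
  refine ⟨hc₁le, ?_⟩
  rcases eq_or_lt_of_le hc₁le with heq | hlt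
  · -- |c₁| = 1 : g attains max modulus at 0, hence constant
    have hmax : IsMaxOn (norm ∘ g) (ball (0:ℂ) 1) 0 := by
      intro z hz
      simp only [Function.comp_apply, hg0]
      calc ‖g z‖ ≤ 1 := hgb z hz
        _ = ‖c₁‖ := heq.symm
        _ = ‖c₁‖ := rfl
    have hconst := Complex.eqOn_of_isPreconnected_of_isMaxOn_norm
      (convex_ball (0:ℂ) 1).isPreconnected isOpen_ball hgd h0 hmax
    have hzero : deriv g 0 = 0 := by
      have hev : g =ᶠ[nhds (0:ℂ)] fun _ => g 0 :=
        Filter.eventuallyEq_of_mem (isOpen_ball.mem_nhds h0) hconst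
      rw [hev.deriv_eq, deriv_const]
    rw [hzero, norm_zero, heq]
    norm_num
  · -- |c₁| < 1 : Schwarz–Pick via Möbius transform
    set m : ℂ → ℂ := fun w => (w - c₁) / (1 - (starRingEnd ℂ) c₁ * w) with hmdef
    have hden : ∀ w : ℂ, ‖w‖ ≤ 1 → 1 - (starRingEnd ℂ) c₁ * w ≠ 0 := by
      intro w hw h
      have h1 : ‖(starRingEnd ℂ) c₁ * w‖ < 1 := by
        rw [norm_mul, Complex.norm_conj]
        nlinarith [norm_nonneg c₁, norm_nonneg w]
      have h2 : (starRingEnd ℂ) c₁ * w = 1 := by linear_combination -h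
      rw [h2] at h1; simp at h1
    have hkey : ∀ w : ℂ, ‖w‖ ≤ 1 → ‖m w‖ ≤ 1 := by
      intro w hw
      have hd := hden w hw
      rw [hmdef]
      simp only [norm_div]
      rw [div_le_one (norm_pos_iff.mpr hd)]
      have hns : Complex.normSq (1 - (starRingEnd ℂ) c₁ * w) - Complex.normSq (w - c₁)
          = (1 - Complex.normSq c₁) * (1 - Complex.normSq w) := by
        simp only [Complex.normSq_apply, Complex.sub_re, Complex.sub_im, Complex.mul_re,
          Complex.mul_im, Complex.one_re, Complex.one_im, Complex.conj_re, Complex.conj_im]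
        ring
      have hw2 : Complex.normSq w ≤ 1 := by
        rw [Complex.normSq_eq_norm_sq]
        nlinarith [norm_nonneg w]
      have hc2 : Complex.normSq c₁ < 1 := by
        rw [Complex.normSq_eq_norm_sq]
        nlinarith [norm_nonneg c₁]
      have : Complex.normSq (w - c₁) ≤ Complex.normSq (1 - (starRingEnd ℂ) c₁ * w) := by
        nlinarith [Complex.normSq_nonneg (w - c₁)]
      rw [Complex.norm_def, Complex.norm_def]
      exact Real.sqrt_le_sqrt this
    set h : ℂ → ℂ := fun z => m (g z) with hhdef
    have hh0 : h 0 = 0 := by simp [hhdef, hmdef, hg0]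
    have hhd : DifferentiableOn ℂ h (ball 0 1) := by
      intro z hz
      have hga : DifferentiableAt ℂ g z := hgd.differentiableAt (isOpen_ball.mem_nhds hz)
      have hma : DifferentiableAt ℂ m (g z) := by
        apply DifferentiableAt.div
        · exact differentiableAt_id.sub (differentiableAt_const _)
        · exact (differentiableAt_const _).sub ((differentiableAt_const _).mul differentiableAt_id)
        · exact hden _ (hgb z hz)
      exact (hma.comp z hga).differentiableWithinAt
    have hderle : ‖deriv h 0‖ ≤ 1 := by
      refine le_of_forall_pos_le_add fun ε hε => ?_
      have hmapsh : Set.MapsTo h (ball 0 1) (ball (h 0) (1 + ε)) := by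
        intro z hz
        rw [mem_ball, hh0, dist_zero_right]
        calc ‖h z‖ = ‖m (g z)‖ := rfl
          _ ≤ 1 := hkey _ (hgb z hz)
          _ < 1 + ε := by linarith
      have := Complex.norm_dslope_le_div_of_mapsTo_ball hhd (hmapsh.mono_right ball_subset_closedBall) h0
      rw [dslope_same] at this
      simpa using this
    have hga0 : DifferentiableAt ℂ g 0 := hgd.differentiableAt (isOpen_ball.mem_nhds h0)
    have hma0 : DifferentiableAt ℂ m c₁ := by
      apply DifferentiableAt.div
      · exact differentiableAt_id.sub (differentiableAt_const _)
      · exact (differentiableAt_const _).sub ((differentiableAt_const _).mul differentiableAt_id)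
      · exact hden _ hc₁le
    have hcomp : deriv h 0 = deriv m c₁ * deriv g 0 := by
      have hma0' : DifferentiableAt ℂ m (g 0) := by rwa [hg0]
      have := deriv_comp 0 hma0' hga0
      rw [hg0] at this
      exact this
    have hd0 : (1 - (starRingEnd ℂ) c₁ * c₁) ≠ 0 := hden c₁ hc₁le
    have hdm : deriv m c₁ = (1 - (starRingEnd ℂ) c₁ * c₁)⁻¹ := by
      have hu : DifferentiableAt ℂ (fun w : ℂ => w - c₁) c₁ :=
        differentiableAt_id.sub (differentiableAt_const _)
      have hv : DifferentiableAt ℂ (fun w : ℂ => 1 - (starRingEnd ℂ) c₁ * w) c₁ :=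
        (differentiableAt_const _).sub ((differentiableAt_const _).mul differentiableAt_id)
      rw [hmdef, deriv_fun_div hu hv hd0]
      have h1 : deriv (fun w : ℂ => w - c₁) c₁ = 1 := ((hasDerivAt_id c₁).sub_const c₁).deriv
      have h2 : deriv (fun w : ℂ => 1 - (starRingEnd ℂ) c₁ * w) c₁ = -((starRingEnd ℂ) c₁) := by
        simpa using (((hasDerivAt_id c₁).const_mul ((starRingEnd ℂ) c₁)).const_sub 1).deriv
      rw [h1, h2]
      field_simp
      ring
    have hgderiv : deriv g 0 = (1 - (starRingEnd ℂ) c₁ * c₁) * deriv h 0 := by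
      rw [hcomp, hdm]
      field_simp
    have habsd : ‖1 - (starRingEnd ℂ) c₁ * c₁‖ = 1 - ‖c₁‖ ^ 2 := by
      have hmc : (starRingEnd ℂ) c₁ * c₁ = (Complex.normSq c₁ : ℂ) := by
        rw [mul_comm, Complex.mul_conj]
      have h1' : Complex.normSq c₁ ≤ 1 := by
        rw [← Complex.sq_norm]; nlinarith [norm_nonneg c₁]
      rw [hmc, ← Complex.ofReal_one, ← Complex.ofReal_sub, Complex.norm_real, Real.norm_eq_abs,
        _root_.abs_of_nonneg (by linarith), Complex.sq_norm]
    calc ‖deriv g 0‖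
        = ‖1 - (starRingEnd ℂ) c₁ * c₁‖ * ‖deriv h 0‖ := by
          rw [hgderiv, norm_mul]
      _ ≤ ‖1 - (starRingEnd ℂ) c₁ * c₁‖ * 1 :=
          mul_le_mul_of_nonneg_left hderle (norm_nonneg _)
      _ = 1 - ‖c₁‖ ^ 2 := by rw [mul_one, habsd]

open Metric Complex

/-- Fekete–Szegő-type coefficient inequality for subordinate functions
(Lemma 3.1 of the paper). -/
theorem fekete_szego_subordination
    (p φ ω : ℂ → ℂ)
    (hp : DifferentiableOn ℂ p (ball 0 1))
    (hφ : DifferentiableOn ℂ φ (ball 0 1))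
    (hω : DifferentiableOn ℂ ω (ball 0 1))
    (hω0 : ω 0 = 0)
    (hωmaps : Set.MapsTo ω (ball 0 1) (ball 0 1))
    (hsub : ∀ z ∈ ball (0 : ℂ) 1, φ z = p (ω z))
    (p₁ p₂ b₁ b₂ : ℂ)
    (hp₁ : p₁ = deriv p 0) (hp₂ : p₂ = iteratedDeriv 2 p 0 / 2)
    (hb₁ : b₁ = deriv φ 0) (hb₂ : b₂ = iteratedDeriv 2 φ 0 / 2)
    (μ : ℂ) :
    ‖b₂ - μ * b₁ ^ 2‖ ≤
      max ‖p₁‖ ‖p₂ - μ * p₁ ^ 2‖ := by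
  have h0 : (0:ℂ) ∈ ball (0:ℂ) 1 := mem_ball_self one_pos
  have hpan : AnalyticOnNhd ℂ p (ball 0 1) := hp.analyticOnNhd isOpen_ball
  have hωan : AnalyticOnNhd ℂ ω (ball 0 1) := hω.analyticOnNhd isOpen_ball
  set c₁ := deriv ω 0 with hc₁
  set c₂ := iteratedDeriv 2 ω 0 / 2 with hc₂
  have hω00 : ω 0 ∈ ball (0:ℂ) 1 := hωmaps h0
  have hder : ∀ z ∈ ball (0:ℂ) 1, deriv φ z = deriv p (ω z) * deriv ω z := by
    intro z hz
    have hev : φ =ᶠ[nhds z] p ∘ ω :=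
      Filter.eventuallyEq_of_mem (isOpen_ball.mem_nhds hz) fun w hw => hsub w hw
    rw [hev.deriv_eq]
    exact deriv_comp z ((hpan _ (hωmaps hz)).differentiableAt) ((hωan z hz).differentiableAt)
  have hb1 : b₁ = p₁ * c₁ := by
    rw [hb₁, hder 0 h0, hω0, hp₁]
  have hu : DifferentiableAt ℂ (fun z => deriv p (ω z)) 0 :=
    ((hpan.deriv _ hω00).differentiableAt).comp 0 ((hωan 0 h0).differentiableAt)
  have hv : DifferentiableAt ℂ (deriv ω) 0 := (hωan.deriv 0 h0).differentiableAt
  have hdu : deriv (fun z => deriv p (ω z)) 0 = deriv (deriv p) (ω 0) * deriv ω 0 :=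
    deriv_comp 0 ((hpan.deriv _ hω00).differentiableAt) ((hωan 0 h0).differentiableAt)
  have h2φ : iteratedDeriv 2 φ 0
      = deriv (deriv p) 0 * c₁ * c₁ + deriv p 0 * deriv (deriv ω) 0 := by
    rw [iteratedDeriv_succ, iteratedDeriv_one]
    have hev : deriv φ =ᶠ[nhds (0:ℂ)] fun z => deriv p (ω z) * deriv ω z :=
      Filter.eventuallyEq_of_mem (isOpen_ball.mem_nhds h0) fun w hw => hder w hw
    rw [hev.deriv_eq, deriv_fun_mul hu hv, hdu, hω0]
  have h2p : iteratedDeriv 2 p 0 = deriv (deriv p) 0 := by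
    rw [iteratedDeriv_succ, iteratedDeriv_one]
  have h2ω : iteratedDeriv 2 ω 0 = deriv (deriv ω) 0 := by
    rw [iteratedDeriv_succ, iteratedDeriv_one]
  have hb2 : b₂ = p₂ * c₁ ^ 2 + p₁ * c₂ := by
    rw [hb₂, h2φ, hp₂, hp₁, h2p, hc₂, h2ω]; ring
  obtain ⟨hc1le, hc2le⟩ := fs_schwarz ω hω hω0 hωmaps
  have hc₂eq : c₂ = deriv (dslope ω 0) 0 := by
    rw [hc₂, ← fs_coeff_two ω (hωan 0 h0)]
  rw [← hc₂eq] at hc2le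
  set M := max (‖p₁‖) (‖p₂ - μ * p₁ ^ 2‖) with hM
  have hident : b₂ - μ * b₁ ^ 2 = p₁ * c₂ + (p₂ - μ * p₁ ^ 2) * c₁ ^ 2 := by
    rw [hb2, hb1]; ring
  have hM1 : ‖p₁‖ ≤ M := le_max_left _ _
  have hM2 : ‖p₂ - μ * p₁ ^ 2‖ ≤ M := le_max_right _ _
  calc ‖b₂ - μ * b₁ ^ 2‖
      ≤ ‖p₁ * c₂‖ + ‖(p₂ - μ * p₁ ^ 2) * c₁ ^ 2‖ := by
        rw [hident]; exact norm_add_le _ _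
    _ = ‖p₁‖ * ‖c₂‖
        + ‖p₂ - μ * p₁ ^ 2‖ * ‖c₁‖ ^ 2 := by
        rw [norm_mul, norm_mul, norm_pow]
    _ ≤ M := by
        nlinarith [norm_nonneg p₁, norm_nonneg (p₂ - μ * p₁ ^ 2),
          norm_nonneg c₁, norm_nonneg c₂,
          mul_le_mul hM1 hc2le (norm_nonneg c₂) (le_trans (norm_nonneg p₁) hM1),
          mul_le_mul hM2 (le_refl (‖c₁‖ ^ 2)) (by positivity)
            (le_trans (norm_nonneg _) hM2)]
end

section
/- Let g₃(z) := (1 − z)/(1 − (2α − 1)z) for α ∈ (0, 1), τ ∈ 𝔻 with g₃(τ) = ℓ for some ℓ in the image, and ĝ(t) = g₃((τ − t)/(1 − t·conj(τ))) = q₀ + q₁t + q₂t² + O(t³). Then |q₁| = 2(Re ℓ − α|ℓ|²) and q₂/q₁ computed via the formula q₁ = −g₃′(τ)(1 − |τ|²), q₂/q₁ = conj(τ) − (g₃″(τ)/(2g₃′(τ)))(1 − |τ|²); in particular |q₁|/2 = Re ℓ − α|ℓ|². -/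
open Metric Complex

private lemma hasDerivAt_mob (p q r s z : ℂ) (h : r + s * z ≠ 0) :
    HasDerivAt (fun t => (p + q * t) / (r + s * t)) ((q * r - s * p) / (r + s * z) ^ 2) z := by
  have h1 : HasDerivAt (fun t : ℂ => p + q * t) q z := by
    simpa using ((hasDerivAt_id z).const_mul q).const_add p
  have h2 : HasDerivAt (fun t : ℂ => r + s * t) s z := by
    simpa using ((hasDerivAt_id z).const_mul s).const_add r
  have h3 := h1.fun_div h2 h
  exact h3.congr_deriv (by ring)

private lemma deriv_mob (p q r s z : ℂ) (h : r + s * z ≠ 0) :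
    deriv (fun t => (p + q * t) / (r + s * t)) z = (q * r - s * p) / (r + s * z) ^ 2 :=
  (hasDerivAt_mob p q r s z h).deriv

private lemma deriv_mob_event (p q r s z : ℂ) (h : r + s * z ≠ 0) :
    deriv (fun t => (p + q * t) / (r + s * t)) =ᶠ[nhds z]
      fun t => (q * r - s * p) / (r + s * t) ^ 2 := by
  have hc : ContinuousAt (fun t : ℂ => r + s * t) z := by fun_prop
  filter_upwards [hc.eventually_ne h] with t ht
  exact deriv_mob p q r s t ht

private lemma deriv2_mob (p q r s z : ℂ) (h : r + s * z ≠ 0) :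
    deriv (deriv (fun t => (p + q * t) / (r + s * t))) z
      = -2 * s * (q * r - s * p) / (r + s * z) ^ 3 := by
  rw [(deriv_mob_event p q r s z h).deriv_eq]
  have h2 : HasDerivAt (fun t : ℂ => (r + s * t) ^ 2) (2 * (r + s * z) * s) z := by
    have hb : HasDerivAt (fun t : ℂ => r + s * t) s z := by
      simpa using ((hasDerivAt_id z).const_mul s).const_add r
    simpa using hb.fun_pow 2
  have h3 := (hasDerivAt_const z (q * r - s * p)).fun_div h2 (pow_ne_zero 2 h)
  rw [h3.deriv]
  field_simp
  ring


/-- Coefficient computation for g₃(z) = (1-z)/(1-(2α-1)z) underlying Corollary 4.5: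
with ℓ = g₃(τ) one has |q₁| = 2(Re ℓ - α|ℓ|²), q₁ = -g₃'(τ)(1-|τ|²) and
q₂/q₁ = conj τ - (g₃″(τ)/(2g₃'(τ)))(1-|τ|²). -/
theorem g3_coefficients
    (α : ℝ) (hα : α ∈ Set.Ioo (0 : ℝ) 1)
    (g₃ : ℂ → ℂ)
    (hg₃ : ∀ z : ℂ, g₃ z = (1 - z) / (1 - (2 * (α : ℂ) - 1) * z))
    (τ : ℂ) (hτ : τ ∈ ball (0 : ℂ) 1)
    (ℓ : ℂ) (hℓ : ℓ = g₃ τ)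
    (gHat : ℂ → ℂ)
    (hgHat : ∀ t, gHat t = g₃ ((τ - t) / (1 - t * (starRingEnd ℂ) τ)))
    (q₁ q₂ : ℂ)
    (hq₁ : q₁ = deriv gHat 0) (hq₂ : q₂ = iteratedDeriv 2 gHat 0 / 2) :
    ‖q₁‖ = 2 * (ℓ.re - α * ‖ℓ‖ ^ 2) ∧
    q₁ = -deriv g₃ τ * (1 - (‖τ‖ : ℂ) ^ 2) ∧
    q₂ / q₁ =
      (starRingEnd ℂ) τ -
        (iteratedDeriv 2 g₃ τ / (2 * deriv g₃ τ)) * (1 - (‖τ‖ : ℂ) ^ 2) := by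
  set a : ℂ := 2 * (α : ℂ) - 1 with ha_def
  set c : ℂ := (starRingEnd ℂ) τ with hc_def
  have hτ1 : ‖τ‖ < 1 := by simpa [Complex.dist_eq] using mem_ball_zero_iff.mp hτ
  have haR : a = ((2*α - 1 : ℝ) : ℂ) := by push_cast [ha_def]; ring
  have ha1 : ‖a‖ < 1 := by
    rw [haR, Complex.norm_real, Real.norm_eq_abs]
    rw [abs_lt]; constructor <;> [linarith [hα.1]; linarith [hα.2]]
  have haτ : (1 : ℂ) - a * τ ≠ 0 := by
    intro h
    have h2 : a * τ = 1 := by linear_combination -h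
    have := congrArg norm h2
    rw [norm_mul, norm_one] at this
    nlinarith [norm_nonneg a, norm_nonneg τ]
  have hcτ : c * τ = ((‖τ‖ : ℝ) : ℂ) ^ 2 := by
    rw [hc_def, mul_comm, Complex.mul_conj, Complex.normSq_eq_norm_sq]
    push_cast; ring
  have hT : ((‖τ‖ : ℝ) : ℂ) ^ 2 ≠ 1 := by
    intro h
    have : ((‖τ‖ ^ 2 : ℝ) : ℂ) = ((1 : ℝ) : ℂ) := by push_cast; push_cast at h; exact h
    have h3 := Complex.ofReal_injective this
    nlinarith [norm_nonneg τ, hτ1, h3]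
  have h1T : (1 : ℂ) - ((‖τ‖ : ℝ) : ℂ) ^ 2 ≠ 0 := by
    intro h; exact hT (by linear_combination -h)
  have ha_ne : a - 1 ≠ 0 := by
    rw [haR]
    intro h
    have h2 : ((2*α - 2 : ℝ) : ℂ) = 0 := by push_cast at h ⊢; linear_combination h
    rw [Complex.ofReal_eq_zero] at h2
    linarith [hα.2]
  have h1a : (1 : ℂ) - a ≠ 0 := fun h => ha_ne (by linear_combination -h)
  -- g₃ in Möbius form
  have hg₃' : g₃ = fun z => (1 + (-1) * z) / (1 + (-a) * z) := by
    funext z; rw [hg₃ z]; ring_nf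
  have hr₃ : (1 : ℂ) + (-a) * τ ≠ 0 := by
    intro h; exact haτ (by linear_combination h)
  have hderiv_g₃ : deriv g₃ τ = (a - 1) / (1 - a * τ) ^ 2 := by
    rw [hg₃', deriv_mob 1 (-1) 1 (-a) τ hr₃]
    ring
  have hderiv2_g₃ : iteratedDeriv 2 g₃ τ = 2 * a * (a - 1) / (1 - a * τ) ^ 3 := by
    rw [iteratedDeriv_succ, iteratedDeriv_one, hg₃', deriv2_mob 1 (-1) 1 (-a) τ hr₃]
    ring
  -- gHat is eventually a Möbius function near 0
  set F : ℂ → ℂ := fun t => ((1 - τ) + (1 - c) * t) / ((1 - a * τ) + (a - c) * t) with hF_def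
  have hFev : gHat =ᶠ[nhds 0] F := by
    have hc0 : ContinuousAt (fun t : ℂ => 1 - t * c) 0 := by fun_prop
    have h0 : (fun t : ℂ => 1 - t * c) 0 ≠ 0 := by simp
    filter_upwards [hc0.eventually_ne h0] with t ht
    rw [hgHat t, hg₃]
    have e1 : 1 - (τ - t) / (1 - t * c) = ((1 - τ) + (1 - c) * t) / (1 - t * c) := by
      field_simp; ring
    have e2 : 1 - a * ((τ - t) / (1 - t * c))
        = ((1 - a * τ) + (a - c) * t) / (1 - t * c) := by
      field_simp; ring
    rw [e1, e2, div_div_div_comm, div_self ht, div_one]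
  have hr : (1 : ℂ) - a * τ + (a - c) * 0 ≠ 0 := by simpa using haτ
  have hq₁' : q₁ = ((1 - a) * (1 - ((‖τ‖ : ℝ) : ℂ) ^ 2)) / (1 - a * τ) ^ 2 := by
    rw [hq₁, hFev.deriv_eq, hF_def, deriv_mob _ _ _ _ _ hr]
    rw [show ((1:ℂ) - c) * (1 - a*τ) - (a - c) * (1 - τ) = (1 - a) * (1 - c * τ) by ring, hcτ]
    simp
  have hK : (1 - a) * (1 - ((‖τ‖ : ℝ) : ℂ) ^ 2) ≠ 0 := by
    apply mul_ne_zero _ h1T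
    intro h; exact ha_ne (by linear_combination -h)
  have hq₁ne : q₁ ≠ 0 := by
    rw [hq₁']
    exact div_ne_zero hK (pow_ne_zero 2 haτ)
  have hq₂' : q₂ = -(a - c) * ((1 - a) * (1 - ((‖τ‖ : ℝ) : ℂ) ^ 2)) / (1 - a * τ) ^ 3 := by
    rw [hq₂, iteratedDeriv_succ, iteratedDeriv_one, (hFev.deriv).deriv_eq, hF_def,
      deriv2_mob _ _ _ _ _ hr]
    rw [show ((1:ℂ) - c) * (1 - a*τ) - (a - c) * (1 - τ) = (1 - a) * (1 - c * τ) by ring, hcτ]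
    simp only [zero_mul, add_zero, mul_zero]
    ring
  refine ⟨?_, ?_, ?_⟩
  · -- |q₁| = 2(Re ℓ - α |ℓ|²)
    have hℓ' : ℓ = (1 - τ) / (1 - a * τ) := by rw [hℓ, hg₃]
    have hconj_a : (starRingEnd ℂ) a = a := by rw [haR, Complex.conj_ofReal]
    have hac : (1 : ℂ) - a * c ≠ 0 := by
      intro h
      have h2 : a * c = 1 := by linear_combination -h
      have h3 := congrArg norm h2
      rw [norm_mul, norm_one, hc_def, Complex.norm_conj] at h3
      nlinarith [norm_nonneg a, norm_nonneg τ]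
    have hconjℓ : (starRingEnd ℂ) ℓ = (1 - c) / (1 - a * c) := by
      rw [hℓ', map_div₀, map_sub, map_sub, map_one, map_mul, hconj_a, ← hc_def]
    have hE : ℓ + (starRingEnd ℂ) ℓ - 2 * (α:ℂ) * (ℓ * (starRingEnd ℂ) ℓ)
        = ((1 - a) * (1 - c * τ)) / ((1 - a * τ) * (1 - a * c)) := by
      rw [hconjℓ, hℓ', show ((α:ℂ)) = (a + 1) / 2 from by rw [ha_def]; ring]
      have haτ' : (1:ℂ) - τ * a ≠ 0 := by rwa [mul_comm]
      field_simp
      ring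
    have hE2 : ℓ + (starRingEnd ℂ) ℓ - 2 * (α:ℂ) * (ℓ * (starRingEnd ℂ) ℓ)
        = ((2 * (ℓ.re - α * ‖ℓ‖ ^ 2) : ℝ) : ℂ) := by
      rw [Complex.add_conj, Complex.mul_conj, Complex.normSq_eq_norm_sq]
      push_cast
      ring
    have hw2 : ((1:ℂ) - a * τ) * (1 - a * c) = ((‖(1 - a * τ)‖ ^ 2 : ℝ) : ℂ) := by
      have hconjw : (starRingEnd ℂ) (1 - a * τ) = 1 - a * c := by
        rw [map_sub, map_one, map_mul, hconj_a, ← hc_def]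
      rw [← hconjw, Complex.mul_conj, Complex.normSq_eq_norm_sq]
    have hnum : ((1:ℂ) - a) * (1 - c * τ)
        = (((2 - 2*α) * (1 - ‖τ‖ ^ 2) : ℝ) : ℂ) := by
      rw [hcτ, haR]; push_cast; try ring
    have hE3 : ((1 - a) * (1 - c * τ)) / ((1 - a * τ) * (1 - a * c))
        = (((2 - 2*α) * (1 - ‖τ‖ ^ 2) / ‖(1 - a * τ)‖ ^ 2 : ℝ) : ℂ) := by
      rw [hnum, hw2]; push_cast; try ring
    have key : 2 * (ℓ.re - α * ‖ℓ‖ ^ 2)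
        = (2 - 2*α) * (1 - ‖τ‖ ^ 2) / ‖(1 - a * τ)‖ ^ 2 :=
      Complex.ofReal_injective (hE2.symm.trans (hE.trans hE3))
    rw [key, hq₁', norm_div, norm_mul, norm_pow]
    have hA : ‖(1 - a)‖ = 2 - 2*α := by
      rw [show (1:ℂ) - a = ((2 - 2*α : ℝ):ℂ) from by rw [haR]; push_cast; ring,
        Complex.norm_real, Real.norm_eq_abs, abs_of_pos (by linarith [hα.2])]
    have hB : ‖(1 - ((‖τ‖ : ℝ):ℂ)^2)‖ = 1 - ‖τ‖ ^ 2 := by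
      rw [show (1:ℂ) - ((‖τ‖:ℝ):ℂ)^2 = ((1 - ‖τ‖^2 : ℝ):ℂ) from by
          push_cast; ring,
        Complex.norm_real, Real.norm_eq_abs, abs_of_pos (by nlinarith [norm_nonneg τ])]
    rw [hA, hB]
  · rw [hq₁', hderiv_g₃]
    field_simp
    ring
  · have e3 : q₂ = q₁ * (-(a - c) / (1 - a * τ)) := by
      rw [hq₂', hq₁']
      field_simp
    have e4 : iteratedDeriv 2 g₃ τ / (2 * deriv g₃ τ) = a / (1 - a * τ) := by
      rw [hderiv_g₃, hderiv2_g₃]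
      field_simp
    rw [e3, e4, mul_comm, mul_div_assoc, div_self hq₁ne, mul_one, ← hcτ]
    field_simp
    ring
end
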